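/- arXiv:2406.03444 — 2 statements merged into one kernel-verified Lean document; each statement's English description precedes it below -/
import Mathlib

section
/- Let Φ be a Φ-function with Φ ∈ (aDec)_q for some q ∈ [1, ∞) with constant b_Φ(q), and let ε ∈ (0, b_Φ(q)^{-1}). Suppose μ and ν are two probability measures on Ω and X is a subspace of C(Ω). If sup over f ∈ X with ‖f‖_{L^Φ(μ)} < 1 of |∫_Ω Φ(|f|) dν − ∫_Ω Φ(|f|) dμ| is at most ε, then for all f ∈ X: a_Φ(1)^{-1}·(b_Φ(q)^{-1} − ε)·‖f‖_{L^Φ(μ)} ≤ ‖f‖_{L^Φ(ν)} ≤ a_Φ(1)·(1 + ε)·‖f‖_{L^Φ(μ)}. -/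
open MeasureTheory

noncomputable section

/-- The sup-norm (uniform norm) `‖f‖_∞ = sup_{x ∈ Ω} |f x|` of a real-valued function. -/
def supNorm {Ω : Type*} (f : Ω → ℝ) : ℝ := ⨆ x, |f x|

/-- The Luxemburg functional `‖f‖_Φ = inf {λ > 0 : ∫ Φ(|f|/λ) dμ ≤ 1}`. -/
def luxNorm {Ω : Type*} [MeasurableSpace Ω] (μ : Measure Ω) (Φ : ℝ → ℝ) (f : Ω → ℝ) : ℝ :=
  sInf {lam : ℝ | 0 < lam ∧ ∫ x, Φ (|f x| / lam) ∂μ ≤ 1}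

/-- The discrete Luxemburg functional `‖f‖_{Φ,x}` with respect to the uniform discrete
probability measure `(1/m) ∑_{j=1}^m δ_{x_j}`. -/
def discLuxNorm {Ω : Type*} (Φ : ℝ → ℝ) {m : ℕ} (x : Fin m → Ω) (f : Ω → ℝ) : ℝ :=
  sInf {lam : ℝ | 0 < lam ∧ (∑ j, Φ (|f (x j)| / lam)) / (m : ℝ) ≤ 1}

/-- The weighted discrete Luxemburg functional `‖f‖_{Φ,x,λ}` with respect to the discrete
probability measure `∑_{j=1}^m λ_j δ_{x_j}`. -/
def wDiscLuxNorm {Ω : Type*} (Φ : ℝ → ℝ) {m : ℕ} (x : Fin m → Ω) (w : Fin m → ℝ)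
    (f : Ω → ℝ) : ℝ :=
  sInf {lam : ℝ | 0 < lam ∧ (∑ j, w j * Φ (|f (x j)| / lam)) ≤ 1}

/-- `Φ : [0,∞) → [0,∞)` is a Φ-prefunction: increasing, `Φ(0) = 0`, `Φ(0+) = 0`,
`Φ(∞) = ∞` (stated for a function on `ℝ`, with the relevant conditions on `[0,∞)`). -/
structure IsPhiPrefun (Φ : ℝ → ℝ) : Prop where
  mono : MonotoneOn Φ (Set.Ici 0)
  map_zero : Φ 0 = 0
  nonneg : ∀ t : ℝ, 0 ≤ t → 0 ≤ Φ t
  tendsto_zero : Filter.Tendsto Φ (nhdsWithin 0 (Set.Ioi 0)) (nhds 0)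
  tendsto_atTop : Filter.Tendsto Φ Filter.atTop Filter.atTop

/-- `Φ ∈ (aInc)_p` with constant `a`: `t ↦ Φ(t) t^{-p}` is almost increasing on `(0,∞)`. -/
def AIncP (Φ : ℝ → ℝ) (p a : ℝ) : Prop :=
  ∀ s t : ℝ, 0 < s → s < t → Φ s / s ^ p ≤ a * (Φ t / t ^ p)

/-- `Φ ∈ (Inc)_p` : `t ↦ Φ(t) t^{-p}` is increasing on `(0,∞)`. -/
def IncP (Φ : ℝ → ℝ) (p : ℝ) : Prop :=
  ∀ s t : ℝ, 0 < s → s < t → Φ s / s ^ p ≤ Φ t / t ^ p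

/-- `Φ ∈ (Dec)_q` : `t ↦ Φ(t) t^{-q}` is decreasing on `(0,∞)`. -/
def DecQ (Φ : ℝ → ℝ) (q : ℝ) : Prop :=
  ∀ s t : ℝ, 0 < s → s < t → Φ t / t ^ q ≤ Φ s / s ^ q

/-- `Φ ∈ (aDec)_q` with constant `b`: `t ↦ Φ(t) t^{-q}` is almost decreasing on `(0,∞)`. -/
def ADecQ (Φ : ℝ → ℝ) (q b : ℝ) : Prop :=
  ∀ s t : ℝ, 0 < s → s < t → Φ t / t ^ q ≤ b * (Φ s / s ^ q)

/-- `t ↦ Φ(t) t^{-p}` is almost increasing with constant `a` on `(t_*, ∞)`. -/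
def AIncPOn (Φ : ℝ → ℝ) (p a tstar : ℝ) : Prop :=
  ∀ s t : ℝ, tstar < s → s < t → Φ s / s ^ p ≤ a * (Φ t / t ^ p)

/-- `t ↦ Φ(t) t^{-q}` is almost decreasing with constant `b` on `(t_*, ∞)`. -/
def ADecQOn (Φ : ℝ → ℝ) (q b tstar : ℝ) : Prop :=
  ∀ s t : ℝ, tstar < s → s < t → Φ t / t ^ q ≤ b * (Φ s / s ^ q)

/-- Entropy numbers `e_n(F, d)` of a set `F` with respect to a distance-like function `dd`:
the infimum of `ε > 0` such that `F` can be covered by `2^{2^n}` (one, for `n = 0`)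
`ε`-balls centered in `F`. -/
def entropyNumD {X : Type*} (dd : X → X → ℝ) (F : Set X) (n : ℕ) : ℝ :=
  sInf {ε : ℝ | 0 < ε ∧ ∃ T : Finset X, ↑T ⊆ F ∧
    T.card ≤ (if n = 0 then 1 else 2 ^ 2 ^ n) ∧ ∀ f ∈ F, ∃ g ∈ T, dd f g < ε}

/-- Sampling numbers `ϱ_m(F, ‖·‖)`: recovery by linear methods from samples at `m` points. -/
def sampNum {Ω : Type*} (nrm : (Ω → ℝ) → ℝ) (F : Set (Ω → ℝ)) (m : ℕ) : ℝ :=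
  sInf {r : ℝ | ∃ (x : Fin m → Ω) (T : (Fin m → ℝ) →ₗ[ℝ] (Ω → ℝ)),
    r = ⨆ f ∈ F, nrm (fun y => f y - T (fun j => f (x j)) y)}

/-- Modified sampling numbers `ϱ*_m(F, ‖·‖)`: recovery by arbitrary methods mapping into a
subspace of dimension at most `m`, from samples at `m` points. -/
def sampNumStar {Ω : Type*} (nrm : (Ω → ℝ) → ℝ) (F : Set (Ω → ℝ)) (m : ℕ) : ℝ :=
  sInf {r : ℝ | ∃ (x : Fin m → Ω) (Y : Submodule ℝ (Ω → ℝ)), Module.finrank ℝ Y ≤ m ∧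
    ∃ T : (Fin m → ℝ) → Ω → ℝ, (∀ v, T v ∈ Y) ∧
    r = ⨆ f ∈ F, nrm (fun y => f y - T (fun j => f (x j)) y)}

/-- Kolmogorov width `d_N(F, ‖·‖_∞)` : infimum over `N`-dimensional subspaces of `C(Ω)` of the
worst-case best approximation error in the uniform norm. -/
def kolWidth {Ω : Type*} [TopologicalSpace Ω] (F : Set (Ω → ℝ)) (N : ℕ) : ℝ :=
  sInf {r : ℝ | ∃ X : Submodule ℝ (Ω → ℝ), Module.finrank ℝ X = N ∧
    (∀ u ∈ X, Continuous u) ∧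
    r = ⨆ f ∈ F, sInf ((fun u => supNorm (fun y => f y - u y)) '' (X : Set (Ω → ℝ)))}

end
set_option linter.unusedSectionVars false

lemma real_le_of_forall_pos_le_add {a b : ℝ} (h : ∀ η : ℝ, 0 < η → a ≤ b + η) : a ≤ b := by
  by_contra hc
  push_neg at hc
  have := h ((a - b) / 2) (by linarith)
  linarith

section helpers

variable {Ω : Type} [MetricSpace Ω] [CompactSpace Ω] [MeasurableSpace Ω] [BorelSpace Ω]
variable {Φ : ℝ → ℝ}

lemma integrable_phi_abs (hpre : IsPhiPrefun Φ) (ρ : Measure Ω) [IsFiniteMeasure ρ]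
    {g : Ω → ℝ} (hg : Continuous g) : Integrable (fun x => Φ (|g x|)) ρ := by
  obtain ⟨M, hM⟩ := (isCompact_range hg.abs).bddAbove
  have hMx : ∀ x, |g x| ≤ max M 0 := fun x => le_trans (hM ⟨x, rfl⟩) (le_max_left _ _)
  have hmono : Monotone (fun t => Φ (max t 0)) := by
    intro s t hst
    exact hpre.mono (Set.mem_Ici.mpr (le_max_right _ _)) (Set.mem_Ici.mpr (le_max_right _ _)) (max_le_max hst le_rfl)
  have hmeas : Measurable fun x => Φ (|g x|) := by
    have h1 : (fun x => Φ (|g x|)) = (fun t => Φ (max t 0)) ∘ fun x => |g x| := by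
      funext x
      simp [max_eq_left (abs_nonneg (g x))]
    rw [h1]
    exact hmono.measurable.comp hg.abs.measurable
  refine ⟨hmeas.aestronglyMeasurable, ?_⟩
  apply MeasureTheory.HasFiniteIntegral.of_bounded (C := Φ (max M 0))
  filter_upwards with x
  rw [Real.norm_eq_abs, abs_of_nonneg (hpre.nonneg _ (abs_nonneg _))]
  exact hpre.mono (Set.mem_Ici.mpr (abs_nonneg _)) (le_trans (abs_nonneg _) (hMx x)) (hMx x)

lemma integrable_phi_div (hpre : IsPhiPrefun Φ) (ρ : Measure Ω) [IsFiniteMeasure ρ]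
    {f : Ω → ℝ} (hf : Continuous f) {lam : ℝ} (hlam : 0 < lam) :
    Integrable (fun x => Φ (|f x| / lam)) ρ := by
  have h := integrable_phi_abs hpre ρ (g := fun x => f x / lam) (hf.div_const lam)
  simpa [abs_div, abs_of_pos hlam] using h

lemma lux_set_nonempty (hpre : IsPhiPrefun Φ) (ρ : Measure Ω) [IsProbabilityMeasure ρ]
    {f : Ω → ℝ} (hf : Continuous f) :
    ∃ lam : ℝ, 0 < lam ∧ ∫ x, Φ (|f x| / lam) ∂ρ ≤ 1 := by
  have h1 : ∀ᶠ t in nhdsWithin 0 (Set.Ioi 0), Φ t < 1 :=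
    hpre.tendsto_zero.eventually_lt_const one_pos
  obtain ⟨t0, ht0lt, ht0pos⟩ := (h1.and eventually_mem_nhdsWithin).exists
  obtain ⟨M, hM⟩ := (isCompact_range hf.abs).bddAbove
  have hMx : ∀ x, |f x| ≤ max M 0 := fun x => le_trans (hM ⟨x, rfl⟩) (le_max_left _ _)
  have ht0 : (0:ℝ) < t0 := ht0pos
  refine ⟨max 1 (max M 0 / t0), lt_of_lt_of_le one_pos (le_max_left _ _), ?_⟩
  set lam := max 1 (max M 0 / t0) with hlamdef
  have hlam : (0:ℝ) < lam := lt_of_lt_of_le one_pos (le_max_left _ _)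
  have hpt : ∀ x, Φ (|f x| / lam) ≤ Φ t0 := by
    intro x
    refine hpre.mono (div_nonneg (abs_nonneg _) hlam.le) ht0.le ?_
    rw [div_le_iff₀ hlam]
    calc |f x| ≤ max M 0 := hMx x
      _ ≤ t0 * lam := by
          rw [← div_le_iff₀' ht0]
          exact le_max_right _ _
  calc ∫ x, Φ (|f x| / lam) ∂ρ ≤ ∫ _x, Φ t0 ∂ρ :=
        integral_mono (integrable_phi_div hpre ρ hf hlam) (integrable_const _) hpt
    _ = Φ t0 := by simp
    _ ≤ 1 := ht0lt.le

lemma lux_nonneg (ρ : Measure Ω) (f : Ω → ℝ) : 0 ≤ luxNorm ρ Φ f :=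
  Real.sInf_nonneg fun _ hy => hy.1.le

lemma lux_le (ρ : Measure Ω) {f : Ω → ℝ} {s : ℝ} (hs : 0 < s)
    (hint : ∫ x, Φ (|f x| / s) ∂ρ ≤ 1) : luxNorm ρ Φ f ≤ s :=
  csInf_le ⟨0, fun _ hy => hy.1.le⟩ ⟨hs, hint⟩

lemma le_lux (hpre : IsPhiPrefun Φ) (ρ : Measure Ω) [IsProbabilityMeasure ρ]
    {f : Ω → ℝ} (hf : Continuous f) {c : ℝ}
    (hc : ∀ lam : ℝ, 0 < lam → ∫ x, Φ (|f x| / lam) ∂ρ ≤ 1 → c ≤ lam) :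
    c ≤ luxNorm ρ Φ f := by
  obtain ⟨lam0, h0, hint0⟩ := lux_set_nonempty hpre ρ hf
  exact le_csInf ⟨lam0, h0, hint0⟩ fun lam hlam => hc lam hlam.1 hlam.2

lemma int_le_one_of_lux_lt (hpre : IsPhiPrefun Φ) (ρ : Measure Ω) [IsProbabilityMeasure ρ]
    {f : Ω → ℝ} (hf : Continuous f) {s : ℝ} (hs : luxNorm ρ Φ f < s) :
    ∫ x, Φ (|f x| / s) ∂ρ ≤ 1 := by
  obtain ⟨lam0, h0, hint0⟩ := lux_set_nonempty hpre ρ hf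
  have hne : {lam : ℝ | 0 < lam ∧ ∫ x, Φ (|f x| / lam) ∂ρ ≤ 1}.Nonempty := ⟨lam0, h0, hint0⟩
  obtain ⟨t, ht, hts⟩ := (csInf_lt_iff (⟨0, fun _ hy => hy.1.le⟩ : BddBelow _) hne).mp hs
  refine le_trans (integral_mono (integrable_phi_div hpre ρ hf (ht.1.trans_le hts.le))
    (integrable_phi_div hpre ρ hf ht.1) ?_) ht.2
  intro x
  refine hpre.mono (div_nonneg (abs_nonneg _) (ht.1.trans_le hts.le).le)
    (div_nonneg (abs_nonneg _) ht.1.le) ?_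
  gcongr
  exact ht.1


lemma aDec_scale (hpre : IsPhiPrefun Φ) {q b : ℝ} (hq : 1 ≤ q) (hdec : ADecQ Φ q b)
    {t s0 : ℝ} (ht : 0 ≤ t) (hs0 : 0 < s0) (hs1 : s0 < 1) :
    Φ (t / s0) ≤ b * (s0 ^ q)⁻¹ * Φ t := by
  rcases eq_or_lt_of_le ht with h | h
  · rw [← h]
    simp [hpre.map_zero]
  · have hlt : t < t / s0 := by
      rw [lt_div_iff₀ hs0]
      nlinarith
    have h1 := hdec t (t / s0) h hlt
    have htq : (0:ℝ) < t ^ q := Real.rpow_pos_of_pos h q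
    have hsq : (0:ℝ) < s0 ^ q := Real.rpow_pos_of_pos hs0 q
    have hdiv : (t / s0) ^ q = t ^ q / s0 ^ q := Real.div_rpow ht hs0.le q
    rw [hdiv] at h1
    have htsq : (0:ℝ) < t ^ q / s0 ^ q := div_pos htq hsq
    have h2 := mul_le_mul_of_nonneg_right h1 htsq.le
    rw [div_mul_cancel₀ _ (ne_of_gt htsq)] at h2
    calc Φ (t / s0) ≤ b * (Φ t / t ^ q) * (t ^ q / s0 ^ q) := h2
      _ = b * (s0 ^ q)⁻¹ * Φ t := by field_simp

lemma aInc_scale (hpre : IsPhiPrefun Φ) {a1 : ℝ} (hA1 : AIncP Φ 1 a1)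
    {t K : ℝ} (ht : 0 ≤ t) (hK : 1 < K) : Φ (t / K) ≤ a1 / K * Φ t := by
  have hK0 : (0:ℝ) < K := lt_trans one_pos hK
  rcases eq_or_lt_of_le ht with h | h
  · rw [← h]
    simp [hpre.map_zero]
  · have h1 := hA1 (t / K) t (div_pos h hK0) (div_lt_self h hK)
    rw [Real.rpow_one, Real.rpow_one] at h1
    have h2 := mul_le_mul_of_nonneg_right h1 (div_nonneg ht hK0.le)
    rw [div_mul_cancel₀ _ (ne_of_gt (div_pos h hK0))] at h2
    calc Φ (t / K) ≤ a1 * (Φ t / t) * (t / K) := h2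
      _ = a1 / K * Φ t := by field_simp

lemma aInc_scale' (hpre : IsPhiPrefun Φ) {a1 : ℝ} (hA1 : AIncP Φ 1 a1)
    {t s : ℝ} (ht : 0 ≤ t) (hs : 0 < s) (hs1 : s < 1) : Φ t ≤ a1 * s * Φ (t / s) := by
  rcases eq_or_lt_of_le ht with h | h
  · rw [← h]
    simp [hpre.map_zero]
  · have h1 := hA1 t (t / s) h (by rw [lt_div_iff₀ hs]; nlinarith)
    rw [Real.rpow_one, Real.rpow_one] at h1
    have h2 := mul_le_mul_of_nonneg_right h1 h.le
    rw [div_mul_cancel₀ _ (ne_of_gt h)] at h2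
    calc Φ t ≤ a1 * (Φ (t / s) / (t / s)) * t := h2
      _ = a1 * s * Φ (t / s) := by field_simp

lemma factA (hpre : IsPhiPrefun Φ) {q b : ℝ} (hq : 1 ≤ q) (hb : 1 ≤ b) (hdec : ADecQ Φ q b)
    (ρ : Measure Ω) [IsProbabilityMeasure ρ] {g : Ω → ℝ} (hg : Continuous g)
    (hle : luxNorm ρ Φ g ≤ 1) : b⁻¹ * luxNorm ρ Φ g ^ q ≤ ∫ x, Φ (|g x|) ∂ρ := by
  have hq0 : (0:ℝ) < q := lt_of_lt_of_le one_pos hq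
  have hb0 : (0:ℝ) < b := lt_of_lt_of_le one_pos hb
  set c := luxNorm ρ Φ g with hc
  have hc0 : 0 ≤ c := lux_nonneg ρ g
  have hInneg : 0 ≤ ∫ x, Φ (|g x|) ∂ρ :=
    integral_nonneg fun x => hpre.nonneg _ (abs_nonneg _)
  rcases eq_or_lt_of_le hc0 with h0 | h0
  · rw [← h0, Real.zero_rpow (ne_of_gt hq0), mul_zero]
    exact hInneg
  by_contra hcon
  push_neg at hcon
  set I := ∫ x, Φ (|g x|) ∂ρ with hI
  -- find s0 with 0 < s0 < c and b * (s0^q)⁻¹ * I ≤ 1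
  have key : ∃ s0 : ℝ, 0 < s0 ∧ s0 < c ∧ b * (s0 ^ q)⁻¹ * I ≤ 1 := by
    rcases eq_or_lt_of_le hInneg with hI0 | hI0
    · exact ⟨c / 2, by positivity, by linarith, by rw [← hI0]; simp⟩
    · refine ⟨(b * I) ^ q⁻¹, Real.rpow_pos_of_pos (by positivity) _, ?_, ?_⟩
      · have hlt : b * I < c ^ q := by
          have := (mul_lt_mul_iff_right₀ hb0).mpr hcon
          calc b * I < b * (b⁻¹ * c ^ q) := this
            _ = c ^ q := by field_simp
        have h2 : ((b * I) ^ q⁻¹) ^ q = b * I := Real.rpow_inv_rpow (by positivity) (ne_of_gt hq0)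
        by_contra hge
        push_neg at hge
        have := Real.rpow_le_rpow h0.le hge hq0.le
        rw [h2] at this
        linarith
      · have h2 : ((b * I) ^ q⁻¹) ^ q = b * I := Real.rpow_inv_rpow (by positivity) (ne_of_gt hq0)
        rw [h2]
        have h3 : b * (b * I)⁻¹ * I = 1 := by
          calc b * (b * I)⁻¹ * I = b * I * (b * I)⁻¹ := by ring
            _ = 1 := mul_inv_cancel₀ (by positivity)
        linarith
  obtain ⟨s0, hs00, hs0c, hs0b⟩ := key
  have hs01 : s0 < 1 := lt_of_lt_of_le hs0c hle
  have hintle : ∫ x, Φ (|g x| / s0) ∂ρ ≤ 1 := by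
    have hpt : ∀ x, Φ (|g x| / s0) ≤ b * (s0 ^ q)⁻¹ * Φ (|g x|) :=
      fun x => aDec_scale hpre hq hdec (abs_nonneg _) hs00 hs01
    calc ∫ x, Φ (|g x| / s0) ∂ρ ≤ ∫ x, b * (s0 ^ q)⁻¹ * Φ (|g x|) ∂ρ :=
          integral_mono (integrable_phi_div hpre ρ hg hs00)
            ((integrable_phi_abs hpre ρ hg).const_mul _) hpt
      _ = b * (s0 ^ q)⁻¹ * I := by rw [integral_const_mul]
      _ ≤ 1 := hs0b
  have := lux_le ρ hs00 hintle
  rw [← hc] at this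
  linarith


lemma factB (hpre : IsPhiPrefun Φ) {a1 : ℝ} (ha1 : 1 ≤ a1) (hA1 : AIncP Φ 1 a1)
    (ρ : Measure Ω) [IsProbabilityMeasure ρ] {g : Ω → ℝ} (hg : Continuous g)
    (hlt : luxNorm ρ Φ g < 1) : ∫ x, Φ (|g x|) ∂ρ ≤ a1 * luxNorm ρ Φ g := by
  have ha0 : (0:ℝ) < a1 := lt_of_lt_of_le one_pos ha1
  have hc0 : 0 ≤ luxNorm ρ Φ g := lux_nonneg ρ g
  refine real_le_of_forall_pos_le_add fun η hη => ?_
  set c := luxNorm ρ Φ g with hcdef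
  set s := min (c + η / a1) ((c + 1) / 2) with hs
  have hsc : c < s := lt_min (by nlinarith [div_pos hη ha0]) (by linarith)
  have hs1 : s < 1 := lt_of_le_of_lt (min_le_right _ _) (by linarith)
  have hs0 : 0 < s := lt_of_le_of_lt hc0 hsc
  have hint : ∫ x, Φ (|g x| / s) ∂ρ ≤ 1 := int_le_one_of_lux_lt hpre ρ hg hsc
  have hpt : ∀ x, Φ (|g x|) ≤ a1 * s * Φ (|g x| / s) := fun x =>
    aInc_scale' hpre hA1 (abs_nonneg _) hs0 hs1
  have hsle : s ≤ c + η / a1 := min_le_left _ _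
  calc ∫ x, Φ (|g x|) ∂ρ ≤ ∫ x, a1 * s * Φ (|g x| / s) ∂ρ :=
        integral_mono (integrable_phi_abs hpre ρ hg)
          ((integrable_phi_div hpre ρ hg hs0).const_mul _) hpt
    _ = a1 * s * ∫ x, Φ (|g x| / s) ∂ρ := integral_const_mul _ _
    _ ≤ a1 * s * 1 := mul_le_mul_of_nonneg_left hint (by positivity)
    _ ≤ a1 * c + η := by
        rw [mul_one]
        have h2 := mul_le_mul_of_nonneg_left hsle ha0.le
        have h3 : a1 * (c + η / a1) = a1 * c + η := by field_simp
        linarith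

end helpers

set_option maxHeartbeats 1000000 in
/-- Lemma lem5. Let `Φ` be a Φ-function with `Φ ∈ (aDec)_q` with constant
`b_Φ(q)`, and `ε ∈ (0, b_Φ(q)⁻¹)`. If the integrals `∫ Φ(|f|) dν` and `∫ Φ(|f|) dμ` differ by
at most `ε` for all `f` in a subspace `X ⊂ C(Ω)` with `‖f‖_{L^Φ(μ)} < 1`, then the Luxemburg
functionals for `μ` and `ν` are equivalent on `X` with the stated constants. -/
theorem statement5 {Ω : Type} [MetricSpace Ω] [CompactSpace Ω] [MeasurableSpace Ω]
    [BorelSpace Ω]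
    (Φ : ℝ → ℝ) (hpre : IsPhiPrefun Φ) (a1 : ℝ) (ha1 : 1 ≤ a1) (hA1 : AIncP Φ 1 a1)
    (q : ℝ) (hq : 1 ≤ q) (b : ℝ) (hb : 1 ≤ b) (hdec : ADecQ Φ q b)
    (ε : ℝ) (hε0 : 0 < ε) (hεb : ε < b⁻¹)
    (μ ν : Measure Ω) [IsProbabilityMeasure μ] [IsProbabilityMeasure ν]
    (X : Submodule ℝ (Ω → ℝ)) (hXcont : ∀ f ∈ X, Continuous f)
    (hclose : ∀ f ∈ X, luxNorm μ Φ f < 1 →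
      |(∫ x, Φ (|f x|) ∂ν) - ∫ x, Φ (|f x|) ∂μ| ≤ ε) :
    ∀ f ∈ X,
      a1⁻¹ * (b⁻¹ - ε) * luxNorm μ Φ f ≤ luxNorm ν Φ f ∧
      luxNorm ν Φ f ≤ a1 * (1 + ε) * luxNorm μ Φ f := by
  intro f hf
  have hfc : Continuous f := hXcont f hf
  have ha0 : (0:ℝ) < a1 := lt_of_lt_of_le one_pos ha1
  have hb0 : (0:ℝ) < b := lt_of_lt_of_le one_pos hb
  have hq0 : (0:ℝ) < q := lt_of_lt_of_le one_pos hq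
  set θ := luxNorm μ Φ f with hθ
  have hθ0 : 0 ≤ θ := lux_nonneg μ f
  clear_value θ
  have hlνn : 0 ≤ luxNorm ν Φ f := lux_nonneg ν f
  constructor
  · -- lower bound
    rcases eq_or_lt_of_le hθ0 with h0 | h0
    · rw [← h0, mul_zero]
      exact hlνn
    have claim : ∀ δ : ℝ, 0 < δ → δ < 1 →
        θ * (a1⁻¹ * (b⁻¹ * (1 - δ) ^ q - ε)) ≤ luxNorm ν Φ f := by
      intro δ hδ0 hδ1
      have h1δ : (0:ℝ) < 1 - δ := by linarith
      set g : Ω → ℝ := fun x => f x * ((1 - δ) / θ) with hg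
      have hgc : Continuous g := hfc.mul continuous_const
      have hgX : g ∈ X := by
        have h := X.smul_mem ((1 - δ) / θ) hf
        have e : g = ((1 - δ) / θ) • f := funext fun x => by
          simp [hg, smul_eq_mul, mul_comm]
        rw [e]
        exact h
      have habs : ∀ x, |g x| = |f x| * ((1 - δ) / θ) := fun x => by
        rw [hg, abs_mul, abs_of_pos (div_pos h1δ h0)]
      have econv : ∀ lam lam' : ℝ, lam ≠ 0 → lam' ≠ 0 → θ * lam' = lam * (1 - δ) →
          (fun x => Φ (|g x| / lam')) = fun x => Φ (|f x| / lam) := by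
        intro lam lam' h1 h2 h3
        funext x
        rw [habs x]
        congr 1
        have hθne : θ ≠ 0 := ne_of_gt h0
        have h1δne : (1 - δ) ≠ 0 := ne_of_gt h1δ
        field_simp
        linear_combination (-|f x|) * h3
      -- luxNorm μ Φ g < 1
      have hgμ1 : luxNorm μ Φ g < 1 := by
        have h1 : luxNorm μ Φ g ≤ 1 - δ / 2 := by
          apply lux_le μ (by linarith)
          have hp1 : (0:ℝ) < θ * (1 - δ / 2) / (1 - δ) :=
            div_pos (mul_pos h0 (by linarith)) h1δ
          rw [econv (θ * (1 - δ / 2) / (1 - δ)) (1 - δ / 2) hp1.ne'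
            (show (0:ℝ) < 1 - δ / 2 by linarith).ne' (div_mul_cancel₀ _ h1δ.ne').symm]
          apply int_le_one_of_lux_lt hpre μ hfc
          rw [← hθ, lt_div_iff₀ h1δ]
          nlinarith
        linarith
      -- 1 - δ ≤ luxNorm μ Φ g
      have hgμge : 1 - δ ≤ luxNorm μ Φ g := by
        by_contra hcon
        push_neg at hcon
        have hgn : 0 ≤ luxNorm μ Φ g := lux_nonneg μ g
        set s₁ := (luxNorm μ Φ g + (1 - δ)) / 2 with hs₁
        have hls₁ : luxNorm μ Φ g < s₁ := by rw [hs₁]; linarith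
        have hs₁pos : 0 < s₁ := lt_of_le_of_lt hgn hls₁
        have hs₁lt : s₁ < 1 - δ := by rw [hs₁]; linarith
        have hint := int_le_one_of_lux_lt hpre μ hgc hls₁
        have hp2 : (0:ℝ) < θ * s₁ / (1 - δ) := div_pos (mul_pos h0 hs₁pos) h1δ
        rw [econv (θ * s₁ / (1 - δ)) s₁ hp2.ne' (ne_of_gt hs₁pos)
          (div_mul_cancel₀ _ h1δ.ne').symm] at hint
        have hle := lux_le μ hp2 hint
        rw [← hθ] at hle
        have : θ * s₁ / (1 - δ) < θ := by
          rw [div_lt_iff₀ h1δ]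
          nlinarith
        linarith
      -- Fact A and closeness
      have hAg := factA hpre hq hb hdec μ hgc hgμ1.le
      have hgnn : (0:ℝ) ≤ 1 - δ := h1δ.le
      have hpow : (1 - δ) ^ q ≤ luxNorm μ Φ g ^ q := Real.rpow_le_rpow hgnn hgμge hq0.le
      have hintμ : b⁻¹ * (1 - δ) ^ q ≤ ∫ x, Φ (|g x|) ∂μ := by
        have h5 := mul_le_mul_of_nonneg_left hpow (inv_nonneg.mpr hb0.le)
        linarith
      have hcl := hclose g hgX hgμ1
      have hintν : b⁻¹ * (1 - δ) ^ q - ε ≤ ∫ x, Φ (|g x|) ∂ν := by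
        have h6 := (abs_le.mp hcl).1
        linarith
      -- scaling
      have hscale : θ / (1 - δ) * luxNorm ν Φ g ≤ luxNorm ν Φ f := by
        apply le_lux hpre ν hfc
        intro lam hlam hint
        have hp3 : (0:ℝ) < lam * (1 - δ) / θ := div_pos (mul_pos hlam h1δ) h0
        have h1 : luxNorm ν Φ g ≤ lam * (1 - δ) / θ := by
          apply lux_le ν hp3
          rw [econv lam (lam * (1 - δ) / θ) (ne_of_gt hlam) hp3.ne'
            (by rw [mul_comm θ, div_mul_cancel₀ _ h0.ne'])]
          exact hint
        have h2 := mul_le_mul_of_nonneg_left h1 (div_pos h0 h1δ).le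
        have h3 : θ / (1 - δ) * (lam * (1 - δ) / θ) = lam := by field_simp
        linarith
      set L := luxNorm ν Φ g with hL
      rcases lt_or_ge L 1 with hgν | hgν
      · have hB := factB hpre ha1 hA1 ν hgc hgν
        have h4 : b⁻¹ * (1 - δ) ^ q - ε ≤ a1 * L := le_trans hintν hB
        rcases le_or_gt (b⁻¹ * (1 - δ) ^ q - ε) 0 with hneg | hpos
        · have h5 : a1⁻¹ * (b⁻¹ * (1 - δ) ^ q - ε) ≤ 0 :=
            mul_nonpos_of_nonneg_of_nonpos (inv_nonneg.mpr ha0.le) hneg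
          nlinarith
        · have h5 : a1⁻¹ * (b⁻¹ * (1 - δ) ^ q - ε) ≤ L := by
            have h6 := mul_le_mul_of_nonneg_left h4 (inv_nonneg.mpr ha0.le)
            rw [← mul_assoc, inv_mul_cancel₀ (ne_of_gt ha0), one_mul] at h6
            exact h6
          have h6 : θ ≤ θ / (1 - δ) := by
            rw [le_div_iff₀ h1δ]
            nlinarith
          calc θ * (a1⁻¹ * (b⁻¹ * (1 - δ) ^ q - ε))
              ≤ θ / (1 - δ) * (a1⁻¹ * (b⁻¹ * (1 - δ) ^ q - ε)) :=
                mul_le_mul_of_nonneg_right h6 (mul_nonneg (inv_nonneg.mpr ha0.le) hpos.le)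
            _ ≤ θ / (1 - δ) * L := mul_le_mul_of_nonneg_left h5 (div_pos h0 h1δ).le
            _ ≤ luxNorm ν Φ f := hscale
      · have h6 : θ / (1 - δ) ≤ θ / (1 - δ) * L :=
          le_mul_of_one_le_right (div_pos h0 h1δ).le hgν
        have h7 : θ ≤ θ / (1 - δ) := by
          rw [le_div_iff₀ h1δ]
          nlinarith
        have hle1 : (1 - δ) ^ q ≤ 1 := Real.rpow_le_one hgnn (by linarith) hq0.le
        have hbinv : b⁻¹ ≤ 1 := by simpa using inv_anti₀ one_pos hb
        have hainv : a1⁻¹ ≤ 1 := by simpa using inv_anti₀ one_pos ha1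
        have h8 : b⁻¹ * (1 - δ) ^ q - ε ≤ 1 := by
          have h8a := mul_le_mul_of_nonneg_left hle1 (inv_nonneg.mpr hb0.le)
          rw [mul_one] at h8a
          linarith
        have h9 : a1⁻¹ * (b⁻¹ * (1 - δ) ^ q - ε) ≤ 1 := by
          have := mul_le_mul_of_nonneg_left h8 (inv_nonneg.mpr ha0.le)
          linarith
        have h10 : θ * (a1⁻¹ * (b⁻¹ * (1 - δ) ^ q - ε)) ≤ θ :=
          mul_le_of_le_one_right h0.le h9
        linarith
    -- take δ → 0
    refine real_le_of_forall_pos_le_add fun η hη => ?_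
    obtain ⟨δ, hδ0, hδ1, hδle⟩ : ∃ δ : ℝ, 0 < δ ∧ δ < 1 ∧ δ ≤ η * a1 * b / (q * θ) :=
      ⟨min (1/2 : ℝ) (η * a1 * b / (q * θ)),
        lt_min (by norm_num) (div_pos (mul_pos (mul_pos hη ha0) hb0) (mul_pos hq0 h0)),
        lt_of_le_of_lt (min_le_left _ _) (by norm_num), min_le_right _ _⟩
    have hber : 1 - q * δ ≤ (1 - δ) ^ q := by
      have h := one_add_mul_self_le_rpow_one_add (show (-1:ℝ) ≤ -δ by linarith) hq
      have e1 : (1:ℝ) + -δ = 1 - δ := by ring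
      have e2 : (1:ℝ) + q * -δ = 1 - q * δ := by ring
      rw [e1, e2] at h
      exact h
    have hclaim := claim δ hδ0 hδ1
    have hkey : θ * (a1⁻¹ * b⁻¹ * q * δ) ≤ η := by
      have h1 : δ * (q * θ) ≤ η * a1 * b :=
        (le_div_iff₀ (mul_pos hq0 h0)).mp hδle
      have h2 := mul_le_mul_of_nonneg_right h1
        (mul_nonneg (inv_nonneg.mpr ha0.le) (inv_nonneg.mpr hb0.le))
      have h3 : η * a1 * b * (a1⁻¹ * b⁻¹) = η := by
        field_simp
      have h4 : θ * (a1⁻¹ * b⁻¹ * q * δ) = δ * (q * θ) * (a1⁻¹ * b⁻¹) := by ring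
      linarith
    have fact1 : θ * a1⁻¹ * b⁻¹ - θ * a1⁻¹ * b⁻¹ * (q * δ) ≤ θ * a1⁻¹ * b⁻¹ * ((1 - δ) ^ q) := by
      linarith [mul_le_mul_of_nonneg_left hber
        (mul_nonneg (mul_nonneg hθ0 (inv_nonneg.mpr ha0.le)) (inv_nonneg.mpr hb0.le))]
    linarith [hclaim, hkey, fact1]
  · -- upper bound
    have key : ∀ lam : ℝ, 0 < lam → (∫ x, Φ (|f x| / lam) ∂μ ≤ 1) → ∀ c : ℝ, 1 < c →
        luxNorm ν Φ f ≤ a1 * (1 + ε) * (c * lam) := by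
      intro lam hlam hint c hc
      have hc0 : (0:ℝ) < c := lt_trans one_pos hc
      set g : Ω → ℝ := fun x => f x * (c * lam)⁻¹ with hg
      have hgc : Continuous g := hfc.mul continuous_const
      have hgX : g ∈ X := by
        have h := X.smul_mem (c * lam)⁻¹ hf
        have e : g = (c * lam)⁻¹ • f := funext fun x => by
          simp [hg, smul_eq_mul, mul_comm]
        rw [e]
        exact h
      have hcl0 : (0:ℝ) < c * lam := mul_pos hc0 hlam
      have habs : ∀ x, |g x| = |f x| * (c * lam)⁻¹ := fun x => by
        rw [hg, abs_mul, abs_of_pos (inv_pos.mpr hcl0)]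
      have hgμ1 : luxNorm μ Φ g < 1 := by
        have h1 : luxNorm μ Φ g ≤ c⁻¹ := by
          apply lux_le μ (inv_pos.mpr hc0)
          have e : (fun x => Φ (|g x| / c⁻¹)) = fun x => Φ (|f x| / lam) := funext fun x => by
            rw [habs x]
            congr 1
            field_simp
          rw [e]
          exact hint
        have h2 : c⁻¹ < 1 := by simpa using inv_strictAnti₀ one_pos hc
        linarith
      have hμg : ∫ x, Φ (|g x|) ∂μ ≤ 1 := by
        refine le_trans (integral_mono (integrable_phi_abs hpre μ hgc)
          (integrable_phi_div hpre μ hfc hlam) ?_) hint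
        intro x
        refine hpre.mono (Set.mem_Ici.mpr (abs_nonneg _)) (div_nonneg (abs_nonneg _) hlam.le) ?_
        rw [habs x, div_eq_mul_inv]
        exact mul_le_mul_of_nonneg_left
          (inv_anti₀ hlam (le_mul_of_one_le_left hlam.le hc.le)) (abs_nonneg _)
      have hcl := hclose g hgX hgμ1
      have hνg : ∫ x, Φ (|g x|) ∂ν ≤ 1 + ε := by
        have h6 := (abs_le.mp hcl).2
        linarith
      have hK1 : 1 < a1 * (1 + ε) := by nlinarith
      have hfin : ∫ x, Φ (|g x| / (a1 * (1 + ε))) ∂ν ≤ 1 := by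
        have hpt : ∀ x, Φ (|g x| / (a1 * (1 + ε))) ≤ a1 / (a1 * (1 + ε)) * Φ (|g x|) :=
          fun x => aInc_scale hpre hA1 (abs_nonneg _) hK1
        calc ∫ x, Φ (|g x| / (a1 * (1 + ε))) ∂ν
            ≤ ∫ x, a1 / (a1 * (1 + ε)) * Φ (|g x|) ∂ν :=
              integral_mono (integrable_phi_div hpre ν hgc (lt_trans one_pos hK1))
                ((integrable_phi_abs hpre ν hgc).const_mul _) hpt
          _ = a1 / (a1 * (1 + ε)) * ∫ x, Φ (|g x|) ∂ν := integral_const_mul _ _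
          _ ≤ a1 / (a1 * (1 + ε)) * (1 + ε) := mul_le_mul_of_nonneg_left hνg
              (div_nonneg ha0.le (mul_pos ha0 (show (0:ℝ) < 1 + ε by linarith)).le)
          _ = 1 := by
              rw [div_mul_eq_mul_div]
              exact div_self (mul_pos ha0 (show (0:ℝ) < 1 + ε by linarith)).ne'
      apply lux_le ν (mul_pos (mul_pos ha0 (show (0:ℝ) < 1 + ε by linarith)) hcl0)
      have e : (fun x => Φ (|f x| / (a1 * (1 + ε) * (c * lam))))
          = fun x => Φ (|g x| / (a1 * (1 + ε))) := funext fun x => by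
        congr 1
        rw [habs x, ← div_eq_mul_inv, div_div, mul_comm (c * lam) (a1 * (1 + ε))]
      rw [e]
      exact hfin
    have step1 : ∀ c : ℝ, 1 < c → luxNorm ν Φ f ≤ a1 * (1 + ε) * c * θ := by
      intro c hc
      have hpos : (0:ℝ) < a1 * (1 + ε) * c :=
        mul_pos (mul_pos ha0 (by linarith)) (lt_trans one_pos hc)
      have h2 : luxNorm ν Φ f / (a1 * (1 + ε) * c) ≤ θ := by
        rw [hθ]
        apply le_lux hpre μ hfc
        intro lam hlam hint
        have h3 := key lam hlam hint c hc
        rw [div_le_iff₀ hpos]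
        calc luxNorm ν Φ f ≤ a1 * (1 + ε) * (c * lam) := h3
          _ = lam * (a1 * (1 + ε) * c) := by ring
      have h4 := (div_le_iff₀ hpos).mp h2
      calc luxNorm ν Φ f ≤ θ * (a1 * (1 + ε) * c) := h4
        _ = a1 * (1 + ε) * c * θ := by ring
    refine real_le_of_forall_pos_le_add fun η hη => ?_
    rcases eq_or_lt_of_le hθ0 with h0 | h0
    · have h5 := step1 2 one_lt_two
      rw [← h0] at h5 ⊢
      simp only [mul_zero, zero_add] at h5 ⊢
      linarith
    · have hden : (0:ℝ) < a1 * (1 + ε) * θ :=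
        mul_pos (mul_pos ha0 (by linarith)) h0
      have hc1 : 1 < 1 + η / (a1 * (1 + ε) * θ) := by
        linarith [div_pos hη hden]
      have h5 := step1 _ hc1
      have he : a1 * (1 + ε) * (1 + η / (a1 * (1 + ε) * θ)) * θ = a1 * (1 + ε) * θ + η := by
        field_simp
      linarith
end

section
/- Let p ≥ 1, D ≥ 1, and let Φ, Ψ be Φ-functions with Φ, Ψ ∈ (aInc)_p. Let μ be a probability measure on Ω, ν a discrete probability measure supported on a finite subset of Ω, and X_N an N-dimensional subspace of C(Ω) such that ‖u‖_{L^Φ(μ)} ≤ D·‖u‖_{L^Ψ(ν)} for all u ∈ X_N. Then for every f ∈ C(Ω), ‖f − ℓ_{L^Ψ(ν),X_N}(f)‖_{L^Φ(μ)} ≤ C(Φ, Ψ, p, D)·d(f, X_N)_∞, where ℓ_{L^Ψ(ν),X_N}(f) := arg min_{u ∈ X_N} ‖f − u‖_{L^Ψ(ν)}, d(f, X_N)_∞ := inf_{u ∈ X_N}‖f − u‖_∞, and C(Φ, Ψ, p, D) = C_Φ·(2·a_Φ(p)^{1/p}·(Φ(1)+1)^{1/p} + 4·D·C_Ψ·a_Ψ(p)^{1/p}·(Ψ(1)+1)^{1/p}),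 with C_Φ and C_Ψ the quasi-triangle constants of ‖·‖_Φ and ‖·‖_Ψ. -/
open MeasureTheory

/-- Helper: the Luxemburg norm of a bounded function with respect to a probability measure is
bounded by `a^(1/p) (Θ(1)+1)^(1/p)` times the bound. -/
lemma lux_le_of_bound {Ω : Type*} [MeasurableSpace Ω] (ρ : MeasureTheory.Measure Ω)
    [MeasureTheory.IsProbabilityMeasure ρ]
    (Θ : ℝ → ℝ) (hpre : IsPhiPrefun Θ) (p a : ℝ) (hp : 1 ≤ p) (ha : 1 ≤ a)
    (hA : AIncP Θ p a) (h : Ω → ℝ) (M : ℝ) (hM : 0 ≤ M) (hb : ∀ x, |h x| ≤ M) :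
    luxNorm ρ Θ h ≤ (a ^ (1 / p) * (Θ 1 + 1) ^ (1 / p)) * M := by
  have hp0 : 0 < p := by linarith
  have ha0 : 0 < a := by linarith
  have hΘ1 : 0 ≤ Θ 1 := hpre.nonneg 1 one_pos.le
  set K : ℝ := a ^ (1 / p) * (Θ 1 + 1) ^ (1 / p) with hKdef
  have hu : (1 : ℝ) ≤ a ^ (1 / p) := by
    calc (1 : ℝ) = 1 ^ (1 / p) := (Real.one_rpow _).symm
    _ ≤ a ^ (1 / p) := Real.rpow_le_rpow one_pos.le ha (by positivity)
  have hv : (1 : ℝ) ≤ (Θ 1 + 1) ^ (1 / p) := by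
    calc (1 : ℝ) = 1 ^ (1 / p) := (Real.one_rpow _).symm
    _ ≤ (Θ 1 + 1) ^ (1 / p) := Real.rpow_le_rpow one_pos.le (by linarith) (by positivity)
  have hK1 : 1 ≤ K := by nlinarith
  have hK0 : 0 < K := by linarith
  have hKp : K ^ p = a * (Θ 1 + 1) := by
    rw [hKdef, Real.mul_rpow (by positivity) (by positivity), ← Real.rpow_mul ha0.le,
      ← Real.rpow_mul (by linarith : (0:ℝ) ≤ Θ 1 + 1), one_div_mul_cancel hp0.ne',
      Real.rpow_one, Real.rpow_one]
  -- every lam strictly above K * M is in the defining set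
  have hmem : ∀ lam : ℝ, 0 < lam → K * M < lam →
      lam ∈ {lam : ℝ | 0 < lam ∧ ∫ x, Θ (|h x| / lam) ∂ρ ≤ 1} := by
    intro lam hlam0 hlamKM
    refine ⟨hlam0, ?_⟩
    have hpt : ∀ x, Θ (|h x| / lam) ≤ 1 := by
      intro x
      rcases eq_or_lt_of_le (abs_nonneg (h x)) with h0 | h0
      · rw [← h0, zero_div, hpre.map_zero]; exact zero_le_one
      · set t : ℝ := |h x| / lam with htdef
        have ht0 : 0 < t := div_pos h0 hlam0
        have hM0 : 0 < M := lt_of_lt_of_le h0 (hb x)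
        have ht1 : t < 1 := by
          rw [htdef, div_lt_one hlam0]
          calc |h x| ≤ M := hb x
          _ ≤ K * M := le_mul_of_one_le_left hM hK1
          _ < lam := hlamKM
        have htK : t ≤ 1 / K := by
          rw [htdef, div_le_div_iff₀ hlam0 hK0]
          nlinarith [hb x]
        have h2 := hA t 1 ht0 ht1
        rw [Real.one_rpow, div_one] at h2
        have htp : (0:ℝ) < t ^ p := Real.rpow_pos_of_pos ht0 p
        have h3 : Θ t ≤ a * Θ 1 * t ^ p := by
          have := (div_le_iff₀ htp).mp h2
          linarith [this]
        have h4 : t ^ p ≤ (1 / K) ^ p :=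
          Real.rpow_le_rpow ht0.le htK (by positivity)
        have h5 : ((1 : ℝ) / K) ^ p = 1 / (a * (Θ 1 + 1)) := by
          rw [one_div, Real.inv_rpow hK0.le, hKp, one_div]
        have h6 : a * Θ 1 * (1 / (a * (Θ 1 + 1))) ≤ 1 := by
          have hden : (0:ℝ) < a * (Θ 1 + 1) := by nlinarith
          rw [mul_one_div, div_le_one hden]
          nlinarith
        calc Θ t ≤ a * Θ 1 * t ^ p := h3
          _ ≤ a * Θ 1 * ((1 : ℝ) / K) ^ p :=
              mul_le_mul_of_nonneg_left h4 (mul_nonneg ha0.le hΘ1)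
          _ = a * Θ 1 * (1 / (a * (Θ 1 + 1))) := by rw [h5]
          _ ≤ 1 := h6
    by_cases hi : MeasureTheory.Integrable (fun x => Θ (|h x| / lam)) ρ
    · calc ∫ x, Θ (|h x| / lam) ∂ρ ≤ ∫ _, (1 : ℝ) ∂ρ :=
          MeasureTheory.integral_mono hi (MeasureTheory.integrable_const 1) fun x => hpt x
      _ = 1 := by simp
    · rw [MeasureTheory.integral_undef hi]; exact zero_le_one
  have hbdd : BddBelow {lam : ℝ | 0 < lam ∧ ∫ x, Θ (|h x| / lam) ∂ρ ≤ 1} :=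
    ⟨0, fun y hy => hy.1.le⟩
  have key : ∀ ε : ℝ, 0 < ε → luxNorm ρ Θ h ≤ K * M + ε := by
    intro ε hε
    have h1 : (0:ℝ) < K * M + ε := by nlinarith
    exact csInf_le hbdd (hmem _ h1 (by linarith))
  exact le_of_forall_pos_le_add key

/-- Helper: the Luxemburg norm is symmetric under swapping the order of subtraction. -/
lemma luxNorm_sub_comm {Ω : Type*} [MeasurableSpace Ω] (ρ : MeasureTheory.Measure Ω)
    (Θ : ℝ → ℝ) (f b : Ω → ℝ) :
    luxNorm ρ Θ (fun y => b y - f y) = luxNorm ρ Θ (fun y => f y - b y) := by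
  unfold luxNorm
  congr 1
  ext lam
  simp only [Set.mem_setOf_eq, abs_sub_comm]

/-- Lemma lem7.1. Let `Φ, Ψ ∈ (aInc)_p` be Φ-functions with quasi-triangle
constants `C_Φ` (for `‖·‖_{L^Φ(μ)}`) and `C_Ψ` (for `‖·‖_{L^Ψ(ν)}`), `μ` a probability
measure, `ν` a discrete probability measure on a finite subset of `Ω`, and `X_N ⊂ C(Ω)` an
`N`-dimensional subspace with `‖u‖_{L^Φ(μ)} ≤ D ‖u‖_{L^Ψ(ν)}` on `X_N`. Then for every
`f ∈ C(Ω)` and every minimizer `g = ℓ_{L^Ψ(ν),X_N}(f)` of `u ↦ ‖f − u‖_{L^Ψ(ν)}` over `X_N`,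
`‖f − g‖_{L^Φ(μ)} ≤ C_Φ (2 a_Φ(p)^{1/p}(Φ(1)+1)^{1/p} + 4 D C_Ψ a_Ψ(p)^{1/p}(Ψ(1)+1)^{1/p})
· d(f, X_N)_∞`. -/
theorem statement16 {Ω : Type} [MetricSpace Ω] [CompactSpace Ω] [MeasurableSpace Ω]
    [BorelSpace Ω]
    (p : ℝ) (hp : 1 ≤ p) (D : ℝ) (hD : 1 ≤ D)
    (Φ Ψ : ℝ → ℝ) (hpreΦ : IsPhiPrefun Φ) (hpreΨ : IsPhiPrefun Ψ)
    (hphiw : ∃ a : ℝ, 1 ≤ a ∧ AIncP Φ 1 a) (hpsiw : ∃ a : ℝ, 1 ≤ a ∧ AIncP Ψ 1 a)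
    (aΦ : ℝ) (haΦ : 1 ≤ aΦ) (hAΦ : AIncP Φ p aΦ)
    (aΨ : ℝ) (haΨ : 1 ≤ aΨ) (hAΨ : AIncP Ψ p aΨ)
    (μ ν : Measure Ω) [IsProbabilityMeasure μ] [IsProbabilityMeasure ν]
    (hνdisc : ∃ s : Set Ω, s.Finite ∧ ν sᶜ = 0)
    (CΦ CΨ : ℝ) (hCΦ0 : 0 < CΦ) (hCΨ0 : 0 < CΨ)
    (hCΦ : ∀ f g : Ω → ℝ, Continuous f → Continuous g →
      luxNorm μ Φ (f + g) ≤ CΦ * (luxNorm μ Φ f + luxNorm μ Φ g))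
    (hCΨ : ∀ f g : Ω → ℝ, Continuous f → Continuous g →
      luxNorm ν Ψ (f + g) ≤ CΨ * (luxNorm ν Ψ f + luxNorm ν Ψ g))
    (X : Submodule ℝ (Ω → ℝ)) (hXcont : ∀ u ∈ X, Continuous u)
    (N : ℕ) (hrank : Module.finrank ℝ X = N)
    (hDom : ∀ u ∈ X, luxNorm μ Φ u ≤ D * luxNorm ν Ψ u) :
    ∀ f : Ω → ℝ, Continuous f →
    ∀ g ∈ X, (∀ u ∈ X, luxNorm ν Ψ (fun y => f y - g y) ≤ luxNorm ν Ψ (fun y => f y - u y)) →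
      luxNorm μ Φ (fun y => f y - g y) ≤
        (CΦ * (2 * aΦ ^ (1 / p) * (Φ 1 + 1) ^ (1 / p) +
          4 * D * CΨ * aΨ ^ (1 / p) * (Ψ 1 + 1) ^ (1 / p))) *
        sInf ((fun u => supNorm (fun y => f y - u y)) '' (X : Set (Ω → ℝ))) := by
  intro f hf g hgX hg
  have hne : Nonempty Ω := by
    rcases isEmpty_or_nonempty Ω with hem | hne
    · exfalso
      have h1 : μ Set.univ = 1 := measure_univ
      rw [Set.univ_eq_empty_iff.mpr hem, measure_empty] at h1
      exact one_ne_zero h1.symm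
    · exact hne
  have hp0 : 0 < p := by linarith
  have hΦ1 : 0 ≤ Φ 1 := hpreΦ.nonneg 1 one_pos.le
  have hΨ1 : 0 ≤ Ψ 1 := hpreΨ.nonneg 1 one_pos.le
  have huΦ : (1 : ℝ) ≤ aΦ ^ (1 / p) := by
    calc (1 : ℝ) = 1 ^ (1 / p) := (Real.one_rpow _).symm
    _ ≤ aΦ ^ (1 / p) := Real.rpow_le_rpow one_pos.le haΦ (by positivity)
  have hvΦ : (1 : ℝ) ≤ (Φ 1 + 1) ^ (1 / p) := by
    calc (1 : ℝ) = 1 ^ (1 / p) := (Real.one_rpow _).symm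
    _ ≤ (Φ 1 + 1) ^ (1 / p) := Real.rpow_le_rpow one_pos.le (by linarith) (by positivity)
  have huΨ : (1 : ℝ) ≤ aΨ ^ (1 / p) := by
    calc (1 : ℝ) = 1 ^ (1 / p) := (Real.one_rpow _).symm
    _ ≤ aΨ ^ (1 / p) := Real.rpow_le_rpow one_pos.le haΨ (by positivity)
  have hvΨ : (1 : ℝ) ≤ (Ψ 1 + 1) ^ (1 / p) := by
    calc (1 : ℝ) = 1 ^ (1 / p) := (Real.one_rpow _).symm
    _ ≤ (Ψ 1 + 1) ^ (1 / p) := Real.rpow_le_rpow one_pos.le (by linarith) (by positivity)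
  set C : ℝ := CΦ * (2 * aΦ ^ (1 / p) * (Φ 1 + 1) ^ (1 / p) +
      4 * D * CΨ * aΨ ^ (1 / p) * (Ψ 1 + 1) ^ (1 / p)) with hCdef
  have hD0 : (0:ℝ) < D := by linarith
  have hCpos : 0 < C := by
    rw [hCdef]
    have t1 : (1:ℝ) ≤ aΦ ^ (1 / p) * (Φ 1 + 1) ^ (1 / p) := by nlinarith
    have t2 : (1:ℝ) ≤ aΨ ^ (1 / p) * (Ψ 1 + 1) ^ (1 / p) := by nlinarith
    have q2 : (0:ℝ) < D * CΨ * (aΨ ^ (1 / p) * (Ψ 1 + 1) ^ (1 / p)) :=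
      mul_pos (mul_pos hD0 hCΨ0) (lt_of_lt_of_le one_pos t2)
    have hsum : (0:ℝ) < 2 * aΦ ^ (1 / p) * (Φ 1 + 1) ^ (1 / p) +
        4 * D * CΨ * aΨ ^ (1 / p) * (Ψ 1 + 1) ^ (1 / p) := by nlinarith
    exact mul_pos hCΦ0 hsum
  have hgc : Continuous g := hXcont g hgX
  -- key estimate against any b ∈ X
  have key : ∀ b ∈ X, luxNorm μ Φ (fun y => f y - g y) ≤
      C * supNorm (fun y => f y - b y) := by
    intro b hb
    have hbc : Continuous b := hXcont b hb
    set E : ℝ := supNorm (fun y => f y - b y) with hEdef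
    have hbdd : BddAbove (Set.range fun x => |f x - b x|) :=
      (isCompact_range ((hf.sub hbc).abs)).bddAbove
    have hEb : ∀ x, |f x - b x| ≤ E := fun x => le_ciSup hbdd x
    have hE0 : 0 ≤ E := (abs_nonneg _).trans (hEb (Classical.arbitrary Ω))
    have h1 : luxNorm μ Φ (fun y => f y - b y) ≤
        (aΦ ^ (1 / p) * (Φ 1 + 1) ^ (1 / p)) * E :=
      lux_le_of_bound μ Φ hpreΦ p aΦ hp haΦ hAΦ _ E hE0 hEb
    have h2 : luxNorm ν Ψ (fun y => f y - b y) ≤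
        (aΨ ^ (1 / p) * (Ψ 1 + 1) ^ (1 / p)) * E :=
      lux_le_of_bound ν Ψ hpreΨ p aΨ hp haΨ hAΨ _ E hE0 hEb
    have heq1 : (fun y => f y - g y) = (fun y => f y - b y) + (fun y => b y - g y) := by
      funext y; simp only [Pi.add_apply]; ring
    have split1 : luxNorm μ Φ (fun y => f y - g y) ≤
        CΦ * (luxNorm μ Φ (fun y => f y - b y) + luxNorm μ Φ (fun y => b y - g y)) := by
      rw [heq1]
      exact hCΦ _ _ (hf.sub hbc) (hbc.sub hgc)
    have hmem : (fun y => b y - g y) ∈ X := X.sub_mem hb hgX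
    have split2 : luxNorm μ Φ (fun y => b y - g y) ≤ D * luxNorm ν Ψ (fun y => b y - g y) :=
      hDom _ hmem
    have heq2 : (fun y => b y - g y) = (fun y => b y - f y) + (fun y => f y - g y) := by
      funext y; simp only [Pi.add_apply]; ring
    have split3 : luxNorm ν Ψ (fun y => b y - g y) ≤
        CΨ * (luxNorm ν Ψ (fun y => b y - f y) + luxNorm ν Ψ (fun y => f y - g y)) := by
      rw [heq2]
      exact hCΨ _ _ (hbc.sub hf) (hf.sub hgc)
    rw [luxNorm_sub_comm ν Ψ f b] at split3
    have hmin : luxNorm ν Ψ (fun y => f y - g y) ≤ luxNorm ν Ψ (fun y => f y - b y) :=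
      hg b hb
    set Q : ℝ := luxNorm ν Ψ (fun y => f y - b y) with hQdef
    have s3 : luxNorm ν Ψ (fun y => b y - g y) ≤
        2 * CΨ * ((aΨ ^ (1 / p) * (Ψ 1 + 1) ^ (1 / p)) * E) := by
      calc luxNorm ν Ψ (fun y => b y - g y)
          ≤ CΨ * (Q + luxNorm ν Ψ (fun y => f y - g y)) := split3
        _ ≤ CΨ * (Q + Q) := mul_le_mul_of_nonneg_left (add_le_add_right hmin Q) hCΨ0.le
        _ = 2 * CΨ * Q := by ring
        _ ≤ 2 * CΨ * ((aΨ ^ (1 / p) * (Ψ 1 + 1) ^ (1 / p)) * E) :=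
            mul_le_mul_of_nonneg_left h2 (by linarith)
    have s2 : luxNorm μ Φ (fun y => b y - g y) ≤
        D * (2 * CΨ * ((aΨ ^ (1 / p) * (Ψ 1 + 1) ^ (1 / p)) * E)) := by
      calc luxNorm μ Φ (fun y => b y - g y)
          ≤ D * luxNorm ν Ψ (fun y => b y - g y) := split2
        _ ≤ D * (2 * CΨ * ((aΨ ^ (1 / p) * (Ψ 1 + 1) ^ (1 / p)) * E)) :=
            mul_le_mul_of_nonneg_left s3 (by linarith)
    calc luxNorm μ Φ (fun y => f y - g y)
        ≤ CΦ * (luxNorm μ Φ (fun y => f y - b y) + luxNorm μ Φ (fun y => b y - g y)) := split1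
      _ ≤ CΦ * ((aΦ ^ (1 / p) * (Φ 1 + 1) ^ (1 / p)) * E +
          D * (2 * CΨ * ((aΨ ^ (1 / p) * (Ψ 1 + 1) ^ (1 / p)) * E))) :=
          mul_le_mul_of_nonneg_left (add_le_add h1 s2) hCΦ0.le
      _ ≤ CΦ * ((2 * aΦ ^ (1 / p) * (Φ 1 + 1) ^ (1 / p) +
          4 * D * CΨ * aΨ ^ (1 / p) * (Ψ 1 + 1) ^ (1 / p)) * E) := by
          have t1 : (0:ℝ) ≤ aΦ ^ (1 / p) * (Φ 1 + 1) ^ (1 / p) * E :=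
            mul_nonneg (mul_nonneg (by linarith) (by linarith)) hE0
          have t2 : (0:ℝ) ≤ D * (CΨ * (aΨ ^ (1 / p) * ((Ψ 1 + 1) ^ (1 / p) * E))) :=
            mul_nonneg hD0.le (mul_nonneg hCΨ0.le (mul_nonneg (by linarith)
              (mul_nonneg (by linarith) hE0)))
          have hinner : (aΦ ^ (1 / p) * (Φ 1 + 1) ^ (1 / p)) * E +
              D * (2 * CΨ * ((aΨ ^ (1 / p) * (Ψ 1 + 1) ^ (1 / p)) * E)) ≤
              (2 * aΦ ^ (1 / p) * (Φ 1 + 1) ^ (1 / p) +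
               4 * D * CΨ * aΨ ^ (1 / p) * (Ψ 1 + 1) ^ (1 / p)) * E := by nlinarith
          exact mul_le_mul_of_nonneg_left hinner hCΦ0.le
      _ = C * E := by rw [hCdef]; ring
  -- pass to the infimum
  set S : Set ℝ := (fun u => supNorm (fun y => f y - u y)) '' (X : Set (Ω → ℝ)) with hSdef
  have hSne : S.Nonempty := ⟨supNorm (fun y => f y - (0 : Ω → ℝ) y), ⟨0, X.zero_mem, rfl⟩⟩
  have hlow : ∀ s ∈ S, luxNorm μ Φ (fun y => f y - g y) / C ≤ s := by
    rintro s ⟨b, hb, rfl⟩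
    rw [div_le_iff₀ hCpos]
    calc luxNorm μ Φ (fun y => f y - g y) ≤ C * supNorm (fun y => f y - b y) := key b hb
      _ = supNorm (fun y => f y - b y) * C := by ring
  have hfin : luxNorm μ Φ (fun y => f y - g y) / C ≤ sInf S := le_csInf hSne hlow
  have := (div_le_iff₀ hCpos).mp hfin
  linarith
end
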